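/- Let q, h, a : ℝ → E³ together with a conical curvature κ : ℝ → ℝ be a Frenet frame of a ruled surface (defined on all of ℝ), and suppose κ is a constant function (as holds for a Darboux slant ruled surface). If u ∈ E³ is a fixed nonzero vector such that s ↦ ⟪h(s), u⟫ is constant (the surface is h-slant with axis u), then s ↦ ⟪q(s), u⟫ and s ↦ ⟪a(s), u⟫ are also constant; that is, the surface is also q-slant and a-slant with the same axis. -/
import Mathlib


open RealInnerProductSpace Matrix

noncomputable section

abbrev E3 := EuclideanSpace ℝ (Fin 3)

/-- A Frenet frame of a ruled surface: `q`, `h`, `a` are orthonormal at every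
parameter and satisfy the Frenet equations with conical curvature `κ`. -/
def IsFrenetFrame (q h a : ℝ → E3) (κ : ℝ → ℝ) : Prop :=
  (∀ s, ⟪q s, q s⟫ = 1 ∧ ⟪h s, h s⟫ = 1 ∧ ⟪a s, a s⟫ = 1 ∧
        ⟪q s, h s⟫ = 0 ∧ ⟪q s, a s⟫ = 0 ∧ ⟪h s, a s⟫ = 0) ∧
  (∀ s, HasDerivAt q (h s) s) ∧
  (∀ s, HasDerivAt h (-q s + κ s • a s) s) ∧
  (∀ s, HasDerivAt a (-(κ s • h s)) s)

/-- The Darboux vector of the frame. -/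
def darboux (q a : ℝ → E3) (κ : ℝ → ℝ) : ℝ → E3 := fun s => κ s • q s + a s

theorem h_slant_implies_q_and_a_slant
    (q h a : ℝ → E3) (κ : ℝ → ℝ)
    (hframe : IsFrenetFrame q h a κ)
    (κ₀ : ℝ) (hκconst : ∀ s, κ s = κ₀)
    (u : E3) (hu : u ≠ 0) (c : ℝ)
    (hslant : ∀ s, ⟪h s, u⟫ = c) :
    (∃ c₁ : ℝ, ∀ s, ⟪q s, u⟫ = c₁) ∧ (∃ c₂ : ℝ, ∀ s, ⟪a s, u⟫ = c₂) := by
  obtain ⟨-, hq', hh', ha'⟩ := hframe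
  have hu0 : ∀ s : ℝ, HasDerivAt (fun _ : ℝ => u) 0 s := fun s => hasDerivAt_const s u
  -- derivatives of the inner product functions
  have dq : ∀ s, HasDerivAt (fun t => ⟪q t, u⟫) c s := by
    intro s
    have := (hq' s).inner ℝ (hu0 s)
    simpa [hslant s] using this
  have dh : ∀ s, HasDerivAt (fun t => ⟪h t, u⟫) (-⟪q s, u⟫ + κ₀ * ⟪a s, u⟫) s := by
    intro s
    have := (hh' s).inner ℝ (hu0 s)
    simpa [inner_add_left, inner_smul_left, hκconst s] using this
  have da : ∀ s, HasDerivAt (fun t => ⟪a t, u⟫) (-(κ₀ * c)) s := by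
    intro s
    have := (ha' s).inner ℝ (hu0 s)
    simpa [inner_smul_left, hκconst s, hslant s] using this
  -- h-slant means the derivative of ⟪h,u⟫ is zero
  have hconst : (fun t => ⟪h t, u⟫) = fun _ => c := funext hslant
  have dh0 : ∀ s : ℝ, HasDerivAt (fun t => ⟪h t, u⟫) 0 s := by
    intro s; rw [hconst]; exact hasDerivAt_const s c
  have hqa : ∀ s, ⟪q s, u⟫ = κ₀ * ⟪a s, u⟫ := by
    intro s
    have := (dh s).unique (dh0 s)
    linarith
  -- so ⟪q,u⟫ = κ₀ • ⟪a,u⟫ has derivative κ₀ * (-(κ₀ * c)), but also c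
  have dq2 : ∀ s, HasDerivAt (fun t => ⟪q t, u⟫) (κ₀ * (-(κ₀ * c))) s := by
    intro s
    have : HasDerivAt (fun t => κ₀ * ⟪a t, u⟫) (κ₀ * (-(κ₀ * c))) s :=
      (da s).const_mul κ₀
    have heq : (fun t => ⟪q t, u⟫) = fun t => κ₀ * ⟪a t, u⟫ := funext hqa
    rw [heq]; exact this
  have hc0 : c = 0 := by
    have := (dq 0).unique (dq2 0)
    nlinarith [sq_nonneg κ₀]
  subst hc0
  constructor
  · refine ⟨⟪q 0, u⟫, fun s => ?_⟩
    have : ∀ x, deriv (fun t => ⟪q t, u⟫) x = 0 := fun x => (dq x).deriv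
    exact is_const_of_deriv_eq_zero (fun x => (dq x).differentiableAt) this s 0
  · refine ⟨⟪a 0, u⟫, fun s => ?_⟩
    have da0 : ∀ x : ℝ, HasDerivAt (fun t => ⟪a t, u⟫) 0 x := by
      intro x; simpa using da x
    exact is_const_of_deriv_eq_zero (fun x => (da0 x).differentiableAt)
      (fun x => (da0 x).deriv) s 0
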